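/- For any ξ ∈ Φ, the point f_ξ²(T) lies to the left of the stable subspace E^s(X) — i.e. (f_ξ²(T)₂ - X₂) - (λ_R^s - τ_R)·(f_ξ²(T)₁ - X₁) > 0 — if and only if ψ(ξ) > 0. -/

import Mathlib

noncomputable section

/-- The parameter region `Φ`: `τ_L > δ_L + 1`, `δ_L > 0`, `τ_R < -(δ_R + 1)`, `δ_R > 0`. -/
def PhiSet : Set (ℝ × ℝ × ℝ × ℝ) :=
  {ξ | ξ.1 > ξ.2.1 + 1 ∧ 0 < ξ.2.1 ∧ ξ.2.2.1 < -(ξ.2.2.2 + 1) ∧ 0 < ξ.2.2.2}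

/-- The two-dimensional border-collision normal form `f_ξ`. -/
def fmap (ξ : ℝ × ℝ × ℝ × ℝ) (z : ℝ × ℝ) : ℝ × ℝ :=
  if z.1 ≤ 0 then (ξ.1 * z.1 + z.2 + 1, -(ξ.2.1 * z.1))
  else (ξ.2.2.1 * z.1 + z.2 + 1, -(ξ.2.2.2 * z.1))

/-- The unstable eigenvalue `λ_R^u` of `A_R`. -/
def lamRu (ξ : ℝ × ℝ × ℝ × ℝ) : ℝ := (ξ.2.2.1 - Real.sqrt (ξ.2.2.1 ^ 2 - 4 * ξ.2.2.2)) / 2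

/-- The stable eigenvalue `λ_R^s` of `A_R`. -/
def lamRs (ξ : ℝ × ℝ × ℝ × ℝ) : ℝ := (ξ.2.2.1 + Real.sqrt (ξ.2.2.1 ^ 2 - 4 * ξ.2.2.2)) / 2

/-- The fixed point `X` of the right piece of `f_ξ`. -/
def fpX (ξ : ℝ × ℝ × ℝ × ℝ) : ℝ × ℝ :=
  (-1 / (ξ.2.2.1 - ξ.2.2.2 - 1), ξ.2.2.2 / (ξ.2.2.1 - ξ.2.2.2 - 1))

/-- The point `T`, the intersection of `E^u(X)` with `y = 0`. -/
def ptT (ξ : ℝ × ℝ × ℝ × ℝ) : ℝ × ℝ := (1 / (1 - lamRs ξ), 0)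

/-- The function `ψ`. -/
def psiFn (ξ : ℝ × ℝ × ℝ × ℝ) : ℝ :=
  (ξ.1 * ξ.2.2.1 - ξ.2.2.2) * lamRu ξ + (ξ.2.1 / ξ.2.2.2 + ξ.2.1 - 1) * lamRs ξ
    - ξ.1 * (1 + ξ.2.2.2) + ξ.2.2.1 * (1 - ξ.2.1)

set_option maxHeartbeats 1000000

/-- Proposition 3.3: for `ξ ∈ Φ`, the point `f_ξ²(T)` lies to the left of the stable
subspace `E^s(X)` if and only if `ψ(ξ) > 0`. -/
theorem f2T_left_of_Es_iff_psi_pos (ξ : ℝ × ℝ × ℝ × ℝ) (hξ : ξ ∈ PhiSet) :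
    0 < ((fmap ξ (fmap ξ (ptT ξ))).2 - (fpX ξ).2)
        - (lamRs ξ - ξ.2.2.1) * ((fmap ξ (fmap ξ (ptT ξ))).1 - (fpX ξ).1)
      ↔ 0 < psiFn ξ := by
  obtain ⟨tL, dL, tR, dR⟩ := ξ
  obtain ⟨htL, hdL, htR, hdR⟩ := hξ
  simp only at htL hdL htR hdR
  set s := Real.sqrt (tR ^ 2 - 4 * dR) with hs_def
  have hdisc : 0 ≤ tR ^ 2 - 4 * dR := by nlinarith [sq_nonneg (dR - 1), mul_pos (show 0 < -(tR + 1 + dR) by linarith) (show 0 < -(tR + 1 + dR) by linarith)]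
  have hs0 : 0 ≤ s := Real.sqrt_nonneg _
  have hs2 : s ^ 2 = tR ^ 2 - 4 * dR := Real.sq_sqrt hdisc
  set ls : ℝ := (tR + s) / 2 with hls_def
  set lu : ℝ := (tR - s) / 2 with hlu_def
  have hsum : ls + lu = tR := by rw [hls_def, hlu_def]; ring
  have hprod : ls * lu = dR := by rw [hls_def, hlu_def]; nlinarith [hs2]
  have hfac : (1 + ls) * (1 + lu) = 1 + tR + dR := by rw [← hsum, ← hprod]; ring
  have hfneg : (1 + ls) * (1 + lu) < 0 := by rw [hfac]; nlinarith
  have hlu1 : lu < -1 := by nlinarith [hs0]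
  have hls1 : -1 < ls := by nlinarith
  have hls0 : ls < 0 := by nlinarith
  have h1s : (0:ℝ) < 1 - ls := by linarith
  have h1u : (0:ℝ) < 1 - lu := by linarith
  have hT1pos : 0 < 1 / (1 - ls) := by positivity
  have hlamRs : lamRs (tL, dL, tR, dR) = ls := rfl
  have hlamRu : lamRu (tL, dL, tR, dR) = lu := rfl
  clear_value s ls lu
  have hx1eq : tR * (1 / (1 - ls)) + 0 + 1 = (lu + 1) / (1 - ls) := by
    field_simp
    linarith [hsum]
  have hx1le : tR * (1 / (1 - ls)) + 0 + 1 ≤ 0 := by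
    rw [hx1eq]
    apply div_nonpos_of_nonpos_of_nonneg <;> linarith
  have e0 : ptT (tL, dL, tR, dR) = (1 / (1 - ls), 0) := by rw [ptT, hlamRs]
  have e1 : fmap (tL, dL, tR, dR) (1 / (1 - ls), 0)
      = (tR * (1 / (1 - ls)) + 0 + 1, -(dR * (1 / (1 - ls)))) := by
    rw [fmap]
    rw [if_neg (by simp only; rw [not_le]; exact hT1pos)]
  have e2 : fmap (tL, dL, tR, dR) (tR * (1 / (1 - ls)) + 0 + 1, -(dR * (1 / (1 - ls))))
      = (tL * (tR * (1 / (1 - ls)) + 0 + 1) + -(dR * (1 / (1 - ls))) + 1,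
         -(dL * (tR * (1 / (1 - ls)) + 0 + 1))) := by
    rw [fmap]
    rw [if_pos (by simp only; exact hx1le)]
  rw [e0, e1, e2, hlamRs, fpX, psiFn, hlamRs, hlamRu]
  simp only
  rw [show tR = ls + lu from hsum.symm, show dR = ls * lu from hprod.symm]
  have hlupos : (0:ℝ) < -lu := by linarith
  have hd1 : (1:ℝ) - ls ≠ 0 := ne_of_gt h1s
  have hd2 : ls + lu - ls * lu - 1 ≠ 0 := by
    have : ls + lu - ls * lu - 1 = -((1 - ls) * (1 - lu)) := by ring
    rw [this]
    have := mul_pos h1s h1u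
    intro hc
    nlinarith
  have hd3 : ls * lu ≠ 0 := ne_of_gt (mul_pos_of_neg_of_neg hls0 (by linarith))
  have hiff : ∀ a b : ℝ, ((1 - ls) * (1 - lu)) * a = (-lu) * b → (0 < a ↔ 0 < b) := by
    intro a b hab
    constructor <;> intro h
    · nlinarith [mul_pos (mul_pos h1s h1u) h]
    · nlinarith [mul_pos hlupos h]
  apply hiff
  have hls_ne : ls ≠ 0 := ne_of_lt hls0
  have hlu_ne : lu ≠ 0 := ne_of_lt (by linarith)
  field_simp
  ring

end
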